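/- Let Ψ : ℚ[K₁, K₂, G, Q] → ℚ[t₁, t₂, r] be the ℚ-algebra homomorphism determined by K₁ ↦ −(t₁ + t₂), K₂ ↦ −(t₁² + t₂²), G ↦ (t₁ − r)(t₂ + r), and Q ↦ (t₁ − r)(t₂ + r)·(t₁ − t₂)(2r − t₁ + t₂). Then the kernel of Ψ is the principal ideal generated by the polynomial Q² + G²(2K₂ + K₁²)(K₁² − 4G). In particular, the ℚ-subalgebra of ℚ[t₁, t₂, r] generated by the images of K₁, K₂, G, Q is isomorphic to ℚ[K₁, K₂, G, Q]/(Q² + G²(2K₂ + K₁²)(K₁² − 4G)). -/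

import Mathlib

open MvPolynomial

noncomputable section KernelOfPsiAux

abbrev R2' := MvPolynomial (Fin 2) ℚ
abbrev R3' := MvPolynomial (Fin 3) ℚ
abbrev R4' := MvPolynomial (Fin 4) ℚ

/-- split off the variable `X 3` of `ℚ[K₁,K₂,G,Q]`. -/
def E4 : R4' ≃ₐ[ℚ] Polynomial R3' :=
  (renameEquiv ℚ (Equiv.swap (0 : Fin 4) 3)).trans (finSuccEquiv ℚ 3)

lemma E4_X3 : E4 (X 3) = Polynomial.X := by
  simp [E4, Equiv.swap_apply_def, finSuccEquiv_X_zero]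

lemma E4_X0 : E4 (X 0) = Polynomial.C (X 2) := by
  have h : ((3:Fin 4)) = Fin.succ 2 := rfl
  simp [E4, Equiv.swap_apply_def, h, finSuccEquiv_X_succ]
  rw [h]; exact finSuccEquiv_X_succ

lemma E4_X1 : E4 (X 1) = Polynomial.C (X 0) := by
  rw [show ((1:Fin 4)) = Fin.succ 0 from rfl]
  simp only [E4, AlgEquiv.trans_apply, renameEquiv_apply, rename_X]
  rw [show (Equiv.swap (0 : Fin 4) 3) (Fin.succ 0) = Fin.succ 0 by decide]
  exact finSuccEquiv_X_succ

lemma E4_X2 : E4 (X 2) = Polynomial.C (X 1) := by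
  rw [show ((2:Fin 4)) = Fin.succ 1 from rfl]
  simp only [E4, AlgEquiv.trans_apply, renameEquiv_apply, rename_X]
  rw [show (Equiv.swap (0 : Fin 4) 3) (Fin.succ 1) = Fin.succ 1 by decide]
  exact finSuccEquiv_X_succ

/-- the inclusion `ℚ[K₂,G,K₁] → ℚ[K₁,K₂,G,Q]` matching `E4`-constants. -/
def ι4 : R3' →ₐ[ℚ] R4' := rename ![1, 2, 0]

lemma E4_iota : ∀ A : R3', E4 (ι4 A) = Polynomial.C A := by
  have h : (E4.toAlgHom.comp ι4) = (Polynomial.CAlgHom : R3' →ₐ[ℚ] Polynomial R3') := by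
    apply MvPolynomial.algHom_ext
    intro i
    fin_cases i <;>
      simp [ι4, rename_X, E4_X0, E4_X1, E4_X2, Polynomial.CAlgHom]
  intro A
  have := congrArg (fun f => f A) (congrArg DFunLike.coe h)
  simpa [Polynomial.CAlgHom] using this

lemma F2_X0 : finSuccEquiv ℚ 2 (X 0) = Polynomial.X := finSuccEquiv_X_zero
lemma F2_X1 : finSuccEquiv ℚ 2 (X 1) = Polynomial.C (X 0) := by
  rw [show (1:Fin 3) = Fin.succ 0 from rfl]; exact finSuccEquiv_X_succ
lemma F2_X2 : finSuccEquiv ℚ 2 (X 2) = Polynomial.C (X 1) := by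
  rw [show (2:Fin 3) = Fin.succ 1 from rfl]; exact finSuccEquiv_X_succ

def sq0 : R3' →ₐ[ℚ] R3' := aeval ![X 0 ^ 2, X 1, X 2]
def sq1 : R3' →ₐ[ℚ] R3' := aeval ![X 0, X 1 ^ 2, X 2]
def sq2 : R3' →ₐ[ℚ] R3' := aeval ![X 0, X 1, X 2 ^ 2]

lemma key_comp : (finSuccEquiv ℚ 2).toAlgHom.comp sq0 =
      ((Polynomial.aeval (Polynomial.X ^ 2 : Polynomial R2')).restrictScalars ℚ).comp
        (finSuccEquiv ℚ 2).toAlgHom := by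
  apply MvPolynomial.algHom_ext
  intro i
  fin_cases i <;> simp [sq0, F2_X0, F2_X1, F2_X2, Polynomial.aeval_C]

lemma comp_X_sq_injective :
    Function.Injective (fun p : Polynomial R2' => p.comp (Polynomial.X ^ 2)) := by
  intro p q h
  have h2 : (p - q).comp (Polynomial.X ^ 2) = 0 := by
    simp only [Polynomial.sub_comp]; simp only at h; rw [h, sub_self]
  rcases Polynomial.comp_eq_zero_iff.1 h2 with h3 | ⟨_, h4⟩
  · exact sub_eq_zero.1 h3
  · exfalso
    have := congrArg Polynomial.natDegree h4
    simp [Polynomial.natDegree_X_pow] at this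

lemma sq0_inj : Function.Injective ⇑sq0 := by
  intro p q h
  have h2 := congrArg (finSuccEquiv ℚ 2) h
  have k := fun p => congrArg (fun f => f p) (congrArg DFunLike.coe key_comp)
  simp only [AlgHom.coe_comp, Function.comp_apply, AlgEquiv.toAlgHom_eq_coe,
    AlgHom.coe_coe, AlgHom.coe_restrictScalars', AlgEquiv.coe_toAlgHom] at k
  rw [k p, k q] at h2
  exact (finSuccEquiv ℚ 2).injective (comp_X_sq_injective (by
    simpa [Polynomial.comp_eq_aeval] using h2))

lemma sq1_eq : sq1 = ((rename (Equiv.swap (0:Fin 3) 1)).comp sq0).comp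
    (rename (Equiv.swap (0:Fin 3) 1)) := by
  apply MvPolynomial.algHom_ext
  intro i
  fin_cases i <;>
    simp [sq1, sq0, rename_X, Equiv.swap_apply_def, Fin.ext_iff]

lemma sq2_eq : sq2 = ((rename (Equiv.swap (0:Fin 3) 2)).comp sq0).comp
    (rename (Equiv.swap (0:Fin 3) 2)) := by
  apply MvPolynomial.algHom_ext
  intro i
  fin_cases i <;>
    simp [sq2, sq0, rename_X, Equiv.swap_apply_def, Fin.ext_iff]

lemma sq1_inj : Function.Injective ⇑sq1 := by
  rw [sq1_eq]
  simp only [AlgHom.coe_comp]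
  exact ((rename_injective _ (Equiv.injective _)).comp sq0_inj).comp
    (rename_injective _ (Equiv.injective _))

lemma sq2_inj : Function.Injective ⇑sq2 := by
  rw [sq2_eq]
  simp only [AlgHom.coe_comp]
  exact ((rename_injective _ (Equiv.injective _)).comp sq0_inj).comp
    (rename_injective _ (Equiv.injective _))

/-- the map `X 0 ↦ K₂, X 1 ↦ G, X 2 ↦ K₁` composed with `Ψ`. -/
def θmap : R3' →ₐ[ℚ] R3' :=
  aeval ![-(X 0 ^ 2 + X 1 ^ 2), (X 0 - X 2) * (X 1 + X 2), -(X 0 + X 1)]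
def ψmap : R3' →ₐ[ℚ] R3' := aeval ![X 0 + X 1, X 0 - X 1, X 1 - X 2]
def ψ'map : R3' →ₐ[ℚ] R3' :=
  aeval ![C (1/2) * (X 0 + X 1), C (1/2) * (X 0 - X 1), C (1/2) * (X 0 - X 1) - X 2]
def τmap : R3' →ₐ[ℚ] R3' :=
  aeval ![-2 * X 0 ^ 2 - 2 * X 1, X 0 ^ 2 - X 2, -2 * X 0]
def τ'map : R3' →ₐ[ℚ] R3' :=
  aeval ![-(C (1/2)) * X 2, -(C (1/2)) * X 0 - C (1/4) * X 2 ^ 2, C (1/4) * X 2 ^ 2 - X 1]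

lemma tau'_tau : ∀ p, τ'map (τmap p) = p := by
  have h : τ'map.comp τmap = AlgHom.id ℚ R3' := by
    apply MvPolynomial.algHom_ext
    intro i
    fin_cases i <;>
    · apply MvPolynomial.funext
      intro x
      simp [τmap, τ'map, map_ofNat]
      try ring
  intro p
  have := congrArg (fun f => f p) (congrArg DFunLike.coe h)
  simpa using this

lemma comp_eq : ψmap.comp θmap = sq2.comp (sq1.comp τmap) := by
  apply MvPolynomial.algHom_ext
  intro i
  fin_cases i <;>
  · apply MvPolynomial.funext
    intro x
    simp [ψmap, θmap, τmap, sq1, sq2, map_ofNat]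
    try ring

lemma theta_inj : Function.Injective ⇑θmap := by
  intro p q h
  have h2 : ψmap (θmap p) = ψmap (θmap q) := congrArg ψmap h
  have k := fun r => congrArg (fun f => f r) (congrArg DFunLike.coe comp_eq)
  simp only [AlgHom.coe_comp, Function.comp_apply] at k
  rw [k p, k q] at h2
  have h3 : τmap p = τmap q := sq1_inj (sq2_inj h2)
  calc p = τ'map (τmap p) := (tau'_tau p).symm
    _ = τ'map (τmap q) := congrArg τ'map h3
    _ = q := tau'_tau q

lemma key2 (A B : R3')
    (h : A ^ 2 + B ^ 2 * (X 1 ^ 2 * (2 * X 0 + X 2 ^ 2) * (X 2 ^ 2 - 4 * X 1)) = 0) :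
    A = 0 ∧ B = 0 := by
  have hB : B = 0 := by
    by_contra hB
    have h2 := congrArg (finSuccEquiv ℚ 2) h
    rw [map_add, map_zero, map_mul, map_pow, map_pow] at h2
    have hc : finSuccEquiv ℚ 2 (X 1 ^ 2 * (2 * X 0 + X 2 ^ 2) * (X 2 ^ 2 - 4 * X 1)) =
        Polynomial.C (X 0 ^ 2) * (Polynomial.C 2 * Polynomial.X + Polynomial.C (X 1 ^ 2)) *
          Polynomial.C (X 1 ^ 2 - 4 * X 0) := by
      simp only [map_mul, map_add, map_sub, map_pow, map_ofNat, F2_X0, F2_X1, F2_X2]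
      try simp only [Polynomial.C_sub, Polynomial.C_mul, Polynomial.C_pow, map_ofNat]
      try ring
    rw [hc] at h2
    set a := finSuccEquiv ℚ 2 A with haa
    set b := finSuccEquiv ℚ 2 B with hbb
    have hb : b ≠ 0 := fun h0 => hB ((map_eq_zero_iff _ (finSuccEquiv ℚ 2).injective).1 h0)
    have hCu : (Polynomial.C (X 0 ^ 2 : R2')) ≠ 0 :=
      Polynomial.C_ne_zero.2 (pow_ne_zero _ (X_ne_zero 0))
    have hw : (X 1 ^ 2 - 4 * X 0 : R2') ≠ 0 := by
      intro h0
      have := congrArg (eval ![(0:ℚ), 1]) h0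
      simp [map_ofNat] at this
    have hCw : (Polynomial.C (X 1 ^ 2 - 4 * X 0 : R2')) ≠ 0 := Polynomial.C_ne_zero.2 hw
    have hlin : (Polynomial.C (2:R2') * Polynomial.X + Polynomial.C (X 1 ^ 2)).natDegree = 1 :=
      Polynomial.natDegree_linear (by norm_num)
    have hlin0 : (Polynomial.C (2:R2') * Polynomial.X + Polynomial.C (X 1 ^ 2)) ≠ 0 := by
      intro h0; rw [h0] at hlin; simp at hlin
    set L := Polynomial.C (X 0 ^ 2 : R2') *
        (Polynomial.C 2 * Polynomial.X + Polynomial.C (X 1 ^ 2)) *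
          Polynomial.C (X 1 ^ 2 - 4 * X 0 : R2') with hL
    have hL0 : L ≠ 0 := mul_ne_zero (mul_ne_zero hCu hlin0) hCw
    have ha2 : a ^ 2 = -(b ^ 2 * L) := by linear_combination h2
    have hrhs : b ^ 2 * L ≠ 0 := mul_ne_zero (pow_ne_zero _ hb) hL0
    have ha : a ≠ 0 := by
      intro h0
      rw [h0] at ha2
      have h1 : (0:Polynomial R2') = -(b ^ 2 * L) := by simpa using ha2
      exact hrhs (neg_eq_zero.1 h1.symm)
    have hdeg := congrArg Polynomial.natDegree ha2
    rw [Polynomial.natDegree_neg, Polynomial.natDegree_pow,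
      Polynomial.natDegree_mul (pow_ne_zero _ hb) hL0, Polynomial.natDegree_pow, hL,
      Polynomial.natDegree_mul (mul_ne_zero hCu hlin0) hCw,
      Polynomial.natDegree_mul hCu hlin0, Polynomial.natDegree_C, Polynomial.natDegree_C,
      hlin] at hdeg
    omega
  constructor
  · rw [hB] at h
    simpa [pow_eq_zero_iff] using h
  · exact hB

lemma deg_le_one_of_lt_two {Rr : Type*} [Semiring Rr] {q : Polynomial Rr}
    (h : q.degree < 2) : q.degree ≤ 1 := Order.le_of_lt_succ h

end KernelOfPsiAux

set_option maxHeartbeats 1000000 in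
theorem kernel_of_Psi
    (Ψ : MvPolynomial (Fin 4) ℚ →ₐ[ℚ] MvPolynomial (Fin 3) ℚ)
    (hΨ : Ψ = aeval ![-(X 0 + X 1 : MvPolynomial (Fin 3) ℚ),
        -(X 0 ^ 2 + X 1 ^ 2), (X 0 - X 2) * (X 1 + X 2),
        (X 0 - X 2) * (X 1 + X 2) * ((X 0 - X 1) * (2 * X 2 - X 0 + X 1))]) :
    RingHom.ker Ψ.toRingHom = Ideal.span
      {X 3 ^ 2 + X 2 ^ 2 * (2 * X 1 + X 0 ^ 2) * (X 0 ^ 2 - 4 * X 2)} ∧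
    Nonempty
      ((MvPolynomial (Fin 4) ℚ ⧸ Ideal.span
          {(X 3 : MvPolynomial (Fin 4) ℚ) ^ 2 +
            X 2 ^ 2 * (2 * X 1 + X 0 ^ 2) * (X 0 ^ 2 - 4 * X 2)}) ≃ₐ[ℚ]
        (Algebra.adjoin ℚ
          ({Ψ (X 0), Ψ (X 1), Ψ (X 2), Ψ (X 3)} : Set (MvPolynomial (Fin 3) ℚ)))) := by
  set F : R4' := X 3 ^ 2 + X 2 ^ 2 * (2 * X 1 + X 0 ^ 2) * (X 0 ^ 2 - 4 * X 2) with hFdef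
  set c : R3' := X 1 ^ 2 * (2 * X 0 + X 2 ^ 2) * (X 2 ^ 2 - 4 * X 1) with hcdef
  have hF : Ψ F = 0 := by
    subst hΨ
    apply MvPolynomial.funext
    intro x
    simp [hFdef, map_ofNat]
    try ring
  have hθ : Ψ.comp ι4 = θmap := by
    apply MvPolynomial.algHom_ext
    intro i
    subst hΨ
    fin_cases i <;> simp [ι4, θmap, rename_X]
  have hθ' : ∀ r, Ψ (ι4 r) = θmap r := by
    intro r
    have := congrArg (fun f => f r) (congrArg DFunLike.coe hθ)
    simpa using this
  have hq : Ψ (X 3) ^ 2 + θmap c = 0 := by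
    subst hΨ
    apply MvPolynomial.funext
    intro x
    simp [hcdef, θmap, map_ofNat]
    try ring
  have hM : E4 F = Polynomial.X ^ 2 + Polynomial.C c := by
    simp only [hFdef, hcdef, map_add, map_mul, map_sub, map_pow, map_ofNat,
      E4_X3, E4_X0, E4_X1, E4_X2]
    try simp only [Polynomial.C_sub, Polynomial.C_mul, Polynomial.C_pow, map_ofNat]
    try ring
  have hMonic : (Polynomial.X ^ 2 + Polynomial.C c : Polynomial R3').Monic :=
    Polynomial.monic_X_pow_add (Polynomial.degree_C_le.trans_lt (by norm_num))
  have hker : RingHom.ker Ψ.toRingHom = Ideal.span {F} := by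
    ext p
    simp only [RingHom.mem_ker]
    constructor
    · intro hp0
      have hp0' : Ψ p = 0 := hp0
      set P := E4 p with hP
      set D := P /ₘ (Polynomial.X ^ 2 + Polynomial.C c) with hD
      set Rr := P %ₘ (Polynomial.X ^ 2 + Polynomial.C c) with hRr
      have hsplit : Rr + (Polynomial.X ^ 2 + Polynomial.C c) * D = P :=
        Polynomial.modByMonic_add_div P _
      have hdegR : Rr.degree < 2 := by
        have := Polynomial.degree_modByMonic_lt P hMonic
        rwa [Polynomial.degree_X_pow_add_C (by norm_num) c] at this
      have hR : Rr = Polynomial.C (Rr.coeff 1) * Polynomial.X + Polynomial.C (Rr.coeff 0) :=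
        Polynomial.eq_X_add_C_of_degree_le_one (deg_le_one_of_lt_two hdegR)
      set A := Rr.coeff 0 with hA
      set B := Rr.coeff 1 with hB
      have hp_eq : p = ι4 B * X 3 + ι4 A + F * E4.symm D := by
        apply E4.injective
        rw [map_add, map_add, map_mul, map_mul, E4_iota, E4_iota, E4_X3, hM,
          AlgEquiv.apply_symm_apply]
        rw [← hP, ← hsplit, hR]
        try ring
      have h0 : θmap A + θmap B * Ψ (X 3) = 0 := by
        have h1 := congrArg Ψ hp_eq
        rw [hp0', map_add, map_add, map_mul, map_mul, hF, zero_mul, hθ' A, hθ' B] at h1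
        linear_combination -h1
      have hABc : A ^ 2 + B ^ 2 * c = 0 := by
        apply theta_inj
        show θmap (A ^ 2 + B ^ 2 * c) = θmap 0
        simp only [map_add, map_mul, map_pow, map_zero]
        linear_combination (θmap A - θmap B * Ψ (X 3)) * h0 + θmap B ^ 2 * hq
      obtain ⟨hA0, hB0⟩ := key2 A B hABc
      rw [hp_eq, hA0, hB0]
      simp only [map_zero, zero_mul, zero_add]
      exact Ideal.mem_span_singleton.2 ⟨E4.symm D, rfl⟩
    · intro hp
      rcases Ideal.mem_span_singleton.1 hp with ⟨d, rfl⟩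
      show Ψ (F * d) = 0
      rw [map_mul, hF, zero_mul]
  refine ⟨hker, Nonempty.intro ?_⟩
  have hadj : Algebra.adjoin ℚ ({Ψ (X 0), Ψ (X 1), Ψ (X 2), Ψ (X 3)} : Set R3') = Ψ.range := by
    have h1 : ({Ψ (X 0), Ψ (X 1), Ψ (X 2), Ψ (X 3)} : Set R3') =
        Set.range (fun i : Fin 4 => Ψ (X i)) := by
      ext y
      simp only [Set.mem_insert_iff, Set.mem_singleton_iff, Set.mem_range]
      constructor
      · rintro (rfl | rfl | rfl | rfl)
        exacts [⟨0, rfl⟩, ⟨1, rfl⟩, ⟨2, rfl⟩, ⟨3, rfl⟩]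
      · rintro ⟨i, rfl⟩
        fin_cases i <;> simp
    have h2 : (aeval (fun i : Fin 4 => Ψ (X i))) = Ψ := by
      apply MvPolynomial.algHom_ext
      intro i
      rw [aeval_X]
    rw [h1, Algebra.adjoin_range_eq_range_aeval, h2]
  exact ((Ideal.quotientEquivAlgOfEq ℚ hker.symm).trans
    (Ideal.quotientKerEquivRange Ψ)).trans (Subalgebra.equivOfEq _ _ hadj.symm)
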